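/- The 5×5 matrix A = [[3,0,1,1,1],[0,6,1,1,2],[1,1,2,0,0],[1,1,0,2,0],[1,2,0,0,2]] is doubly nonnegative and invertible (det(A) = 4), and it is completely positive with cp-rank exactly 6; in particular its cp-rank strictly exceeds its rank 5. -/

import Mathlib

open Matrix BigOperators

def Matrix.IsCP {n : Type*} [Fintype n] (A : Matrix n n ℝ) : Prop :=
  ∃ (m : ℕ) (B : Matrix (Fin m) n ℝ), (∀ i j, 0 ≤ B i j) ∧ A = Bᵀ * B

noncomputable def Matrix.cpRank {n : Type*} [Fintype n] (A : Matrix n n ℝ) : ℕ :=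
  sInf {m | ∃ B : Matrix (Fin m) n ℝ, (∀ i j, 0 ≤ B i j) ∧ A = Bᵀ * B}

noncomputable def cpB17 : Matrix (Fin 6) (Fin 5) ℝ :=
  !![1,0,1,0,0; 1,0,0,1,0; 1,0,0,0,1; 0,1,1,0,0; 0,1,0,1,0; 0,2,0,0,1]

theorem stmt_17 :
    let A : Matrix (Fin 5) (Fin 5) ℝ :=
      !![3,0,1,1,1; 0,6,1,1,2; 1,1,2,0,0; 1,1,0,2,0; 1,2,0,0,2]
    (∀ i j, 0 ≤ A i j) ∧ A.PosSemidef ∧ A.det = 4 ∧ A.rank = 5 ∧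
      A.IsCP ∧ A.cpRank = 6 := by
  intro A
  have hfact : A = cpB17ᵀ * cpB17 := by
    ext i j
    fin_cases i <;> fin_cases j <;>
      norm_num [A, cpB17, Matrix.mul_apply, Fin.sum_univ_succ]
  have hnn : ∀ i j, 0 ≤ A i j := by
    intro i j
    fin_cases i <;> fin_cases j <;> norm_num [A]
  have hpsd : A.PosSemidef := by
    rw [hfact]
    have : cpB17ᵀ = cpB17ᴴ := by
      ext i j; simp [Matrix.conjTranspose_apply, Matrix.transpose_apply]
    rw [this]
    exact Matrix.posSemidef_conjTranspose_mul_self cpB17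
  have hdet : A.det = 4 := by
    show Matrix.det _ = 4
    simp +decide [A, Matrix.det_succ_row_zero, Fin.sum_univ_succ, Fin.succAbove]
    norm_num
  have hrank : A.rank = 5 := by
    have hu : IsUnit A := by
      rw [Matrix.isUnit_iff_isUnit_det, isUnit_iff_ne_zero, hdet]
      norm_num
    simpa using Matrix.rank_of_isUnit A hu
  have hcpnn : ∀ i j, (0:ℝ) ≤ cpB17 i j := by
    intro i j; fin_cases i <;> fin_cases j <;> norm_num [cpB17]
  have h6mem : 6 ∈ {m | ∃ B : Matrix (Fin m) (Fin 5) ℝ, (∀ i j, 0 ≤ B i j) ∧ A = Bᵀ * B} :=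
    ⟨cpB17, hcpnn, hfact⟩
  have key : ∀ m ∈ {m | ∃ B : Matrix (Fin m) (Fin 5) ℝ, (∀ i j, 0 ≤ B i j) ∧ A = Bᵀ * B},
      6 ≤ m := by
    rintro m ⟨B, hB, hAB⟩
    have hentry : ∀ j k, A j k = ∑ i, B i j * B i k := by
      intro j k
      rw [hAB]
      simp [Matrix.mul_apply, Matrix.transpose_apply]
    have hz : ∀ j k, A j k = 0 → ∀ i, B i j * B i k = 0 := by
      intro j k h i
      have h0 : ∑ i, B i j * B i k = 0 := by rw [← hentry]; exact h
      exact (Finset.sum_eq_zero_iff_of_nonneg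
        (fun i _ => mul_nonneg (hB i j) (hB i k))).mp h0 i (Finset.mem_univ i)
    have hno : ∀ (i : Fin m) j k, A j k = 0 → 0 < B i j → 0 < B i k → False := by
      intro i j k h h1 h2
      have := hz j k h i
      nlinarith
    have hp : ∀ j k, 0 < A j k → ∃ i, 0 < B i j ∧ 0 < B i k := by
      intro j k h
      by_contra hc
      push_neg at hc
      have hsum : ∑ i, B i j * B i k = 0 := Finset.sum_eq_zero (fun i _ => by
        rcases lt_or_eq_of_le (hB i j) with h1 | h1
        · have h2 := hc i h1
          have h3 : B i k = 0 := le_antisymm h2 (hB i k)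
          rw [h3, mul_zero]
        · rw [← h1, zero_mul])
      rw [← hentry] at hsum
      linarith
    obtain ⟨i02, h02a, h02b⟩ := hp 0 2 (by simp [A])
    obtain ⟨i03, h03a, h03b⟩ := hp 0 3 (by simp [A])
    obtain ⟨i04, h04a, h04b⟩ := hp 0 4 (by simp [A])
    obtain ⟨i12, h12a, h12b⟩ := hp 1 2 (by simp [A])
    obtain ⟨i13, h13a, h13b⟩ := hp 1 3 (by simp [A])
    obtain ⟨i14, h14a, h14b⟩ := hp 1 4 (by simp [A])
    have hA01 : A 0 1 = 0 := by norm_num [A]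
    have hA23 : A 2 3 = 0 := by simp [A]
    have hA24 : A 2 4 = 0 := by simp [A]
    have hA34 : A 3 4 = 0 := by simp [A]
    have d1 : i02 ≠ i03 := fun h => hno i03 2 3 hA23 (h ▸ h02b) h03b
    have d2 : i02 ≠ i04 := fun h => hno i04 2 4 hA24 (h ▸ h02b) h04b
    have d3 : i02 ≠ i12 := fun h => hno i12 0 1 hA01 (h ▸ h02a) h12a
    have d4 : i02 ≠ i13 := fun h => hno i13 0 1 hA01 (h ▸ h02a) h13a
    have d5 : i02 ≠ i14 := fun h => hno i14 0 1 hA01 (h ▸ h02a) h14a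
    have d6 : i03 ≠ i04 := fun h => hno i04 3 4 hA34 (h ▸ h03b) h04b
    have d7 : i03 ≠ i12 := fun h => hno i12 0 1 hA01 (h ▸ h03a) h12a
    have d8 : i03 ≠ i13 := fun h => hno i13 0 1 hA01 (h ▸ h03a) h13a
    have d9 : i03 ≠ i14 := fun h => hno i14 0 1 hA01 (h ▸ h03a) h14a
    have d10 : i04 ≠ i12 := fun h => hno i12 0 1 hA01 (h ▸ h04a) h12a
    have d11 : i04 ≠ i13 := fun h => hno i13 0 1 hA01 (h ▸ h04a) h13a
    have d12 : i04 ≠ i14 := fun h => hno i14 0 1 hA01 (h ▸ h04a) h14a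
    have d13 : i12 ≠ i13 := fun h => hno i13 2 3 hA23 (h ▸ h12b) h13b
    have d14 : i12 ≠ i14 := fun h => hno i14 2 4 hA24 (h ▸ h12b) h14b
    have d15 : i13 ≠ i14 := fun h => hno i14 3 4 hA34 (h ▸ h13b) h14b
    have hcard : ({i02, i03, i04, i12, i13, i14} : Finset (Fin m)).card = 6 := by
      rw [Finset.card_insert_of_notMem (by simp [d1, d2, d3, d4, d5]),
        Finset.card_insert_of_notMem (by simp [d6, d7, d8, d9]),
        Finset.card_insert_of_notMem (by simp [d10, d11, d12]),
        Finset.card_insert_of_notMem (by simp [d13, d14]),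
        Finset.card_insert_of_notMem (by simp [d15]),
        Finset.card_singleton]
    have hle := Finset.card_le_univ ({i02, i03, i04, i12, i13, i14} : Finset (Fin m))
    rw [hcard] at hle
    simpa using hle
  refine ⟨hnn, hpsd, hdet, hrank, ⟨6, cpB17, hcpnn, hfact⟩, ?_⟩
  exact le_antisymm (Nat.sInf_le h6mem) (le_csInf ⟨6, h6mem⟩ key)
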